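/- Let $\hat f^\star, \hat r \in \mathbb{R}_{\ge 0}^{|\mathcal{Y}|}$ with $\hat f^\star$ in the probability simplex, and let $\epsilon \in (0, 1/2]$. Writing $\odot$ for componentwise product and $\langle \cdot,\cdot\rangle$ for the inner product, assume $1 + \langle \hat f^\star, \hat r - \mathbf{1}\rangle > 0$. Then $\Big\| \frac{\hat f^\star \langle \hat f^\star, \hat r - \mathbf{1}\rangle - \hat f^\star \odot (\hat r - \mathbf{1})}{1 + \langle \hat f^\star, \hat r - \mathbf{1}\rangle} \Big\|_1 \le 2 \cdot \mathbf{1}\{\|\hat r - \mathbf{1}\|_\infty > \epsilon\} + \frac{2\epsilon}{1-\epsilon}$. -/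

import Mathlib

open Classical in
/-- Bound on the `ℓ₁` norm of the self-normalization error of reweighted
empirical frequencies. -/
theorem stmt_9 (𝒴 : Type*) [Fintype 𝒴]
    (f r : 𝒴 → ℝ) (hf : ∀ y, 0 ≤ f y) (hf1 : ∑ y, f y = 1)
    (hr : ∀ y, 0 ≤ r y)
    (ε : ℝ) (hε : ε ∈ Set.Ioc (0 : ℝ) (1 / 2))
    (hden : 0 < 1 + ∑ y, f y * (r y - 1)) :
    ∑ y, |(f y * (∑ z, f z * (r z - 1)) - f y * (r y - 1))
          / (1 + ∑ z, f z * (r z - 1))|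
      ≤ 2 * (if ∃ y, ε < |r y - 1| then (1 : ℝ) else 0) + 2 * ε / (1 - ε) := by
  obtain ⟨hε0, hε2⟩ := hε
  have hε1 : ε < 1 := lt_of_le_of_lt hε2 (by norm_num)
  set S := ∑ z, f z * (r z - 1) with hS
  have hD : (0:ℝ) < 1 + S := hden
  have hfr : ∑ y, f y * r y = S + 1 := by
    have : ∀ y, f y * r y = f y * (r y - 1) + f y := fun y => by ring
    simp_rw [this, Finset.sum_add_distrib, hf1]
    rfl
  by_cases h : ∃ y, ε < |r y - 1|
  · rw [if_pos h]
    have key : ∑ y, |(f y * S - f y * (r y - 1)) / (1 + S)| ≤ 2 := by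
      have hb : ∀ y ∈ (Finset.univ : Finset 𝒴),
          |(f y * S - f y * (r y - 1)) / (1 + S)| ≤ (f y * ((1 + S) + r y)) / (1 + S) := by
        intro y _
        rw [abs_div, abs_of_pos hD]
        apply div_le_div_of_nonneg_right ?_ hD.le
        have e1 : f y * S - f y * (r y - 1) = f y * ((1 + S) - r y) := by ring
        rw [e1, abs_mul, abs_of_nonneg (hf y)]
        have : |(1 + S) - r y| ≤ (1 + S) + r y := by
          calc |(1 + S) - r y| ≤ |1 + S| + |r y| := abs_sub _ _
          _ = (1 + S) + r y := by rw [abs_of_pos hD, abs_of_nonneg (hr y)]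
        exact mul_le_mul_of_nonneg_left this (hf y)
      calc ∑ y, |(f y * S - f y * (r y - 1)) / (1 + S)|
          ≤ ∑ y, (f y * ((1 + S) + r y)) / (1 + S) := Finset.sum_le_sum hb
        _ = (∑ y, f y * ((1 + S) + r y)) / (1 + S) := by rw [Finset.sum_div]
        _ = (2 * (1 + S)) / (1 + S) := by
            congr 1
            have : ∀ y, f y * ((1 + S) + r y) = f y * (1 + S) + f y * r y := fun y => by ring
            simp_rw [this, Finset.sum_add_distrib, ← Finset.sum_mul, hf1, hfr]
            ring
        _ = 2 := by field_simp
    linarith [div_nonneg (by linarith : (0:ℝ) ≤ 2 * ε) (by linarith : (0:ℝ) ≤ 1 - ε)]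
  · rw [if_neg h]
    push_neg at h
    have hSb : |S| ≤ ε := by
      calc |S| ≤ ∑ y, |f y * (r y - 1)| := Finset.abs_sum_le_sum_abs _ _
      _ ≤ ∑ y, f y * ε := by
          apply Finset.sum_le_sum
          intro y _
          rw [abs_mul, abs_of_nonneg (hf y)]
          exact mul_le_mul_of_nonneg_left (h y) (hf y)
      _ = ε := by rw [← Finset.sum_mul, hf1, one_mul]
    have hD2 : 1 - ε ≤ 1 + S := by linarith [(abs_le.mp hSb).1]
    have hb : ∀ y ∈ (Finset.univ : Finset 𝒴),
        |(f y * S - f y * (r y - 1)) / (1 + S)| ≤ (f y * (2 * ε)) / (1 + S) := by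
      intro y _
      rw [abs_div, abs_of_pos hD]
      apply div_le_div_of_nonneg_right ?_ hD.le
      have e1 : f y * S - f y * (r y - 1) = f y * (S - (r y - 1)) := by ring
      rw [e1, abs_mul, abs_of_nonneg (hf y)]
      have : |S - (r y - 1)| ≤ 2 * ε := by
        calc |S - (r y - 1)| ≤ |S| + |r y - 1| := abs_sub _ _
        _ ≤ ε + ε := add_le_add hSb (h y)
        _ = 2 * ε := by ring
      exact mul_le_mul_of_nonneg_left this (hf y)
    calc ∑ y, |(f y * S - f y * (r y - 1)) / (1 + S)|
        ≤ ∑ y, (f y * (2 * ε)) / (1 + S) := Finset.sum_le_sum hb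
      _ = (2 * ε) / (1 + S) := by
          rw [← Finset.sum_div, ← Finset.sum_mul, hf1, one_mul]
      _ ≤ (2 * ε) / (1 - ε) := by
          apply div_le_div_of_nonneg_left (by linarith) (by linarith) hD2
      _ = 2 * 0 + 2 * ε / (1 - ε) := by ring
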